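/- For every positive integer n and every real x > 0, the n-th derivative of the function x ↦ e^{-1/x} equals (-1)^n e^{-1/x} ∑_{k=1}^{n} (-1)^k L(n,k) x^{-(n+k)}. -/

import Mathlib

open Finset

/-- Lah numbers: `L(n,k) = C(n-1,k-1) * n! / k!` (as a real number). -/
noncomputable def lah (n k : ℕ) : ℝ :=
  ((n - 1).choose (k - 1) : ℝ) * (Nat.factorial n) / (Nat.factorial k)

lemma key (m i : ℕ) : (m+2) * Nat.choose (m+1) (i+1) = (m+i+3) * Nat.choose m (i+1) + (i+2) * Nat.choose m i := by
  have h := Nat.choose_succ_right_eq m i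
  rw [Nat.choose_succ_succ]
  rcases le_or_gt i m with h2 | h2
  · have : m - i + i = m := by omega
    nlinarith [h, this]
  · have h3 : Nat.choose m (i+1) = 0 := Nat.choose_eq_zero_of_lt (by omega)
    have h4 : Nat.choose m i = 0 := Nat.choose_eq_zero_of_lt h2
    simp [h3, h4]

lemma lah_rec (n i : ℕ) (hn : 1 ≤ n) :
    lah (n+1) (i+2) = (n + i + 2) * lah n (i+2) + lah n (i+1) := by
  obtain ⟨m, rfl⟩ : ∃ m, n = m + 1 := ⟨n-1, by omega⟩
  simp only [lah, Nat.add_sub_cancel]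
  have h3 : (i + 2 - 1) = i + 1 := by omega
  rw [h3]
  have hk := key m i
  have hc : ((m+2) * Nat.choose (m+1) (i+1) : ℝ) = (m+i+3) * Nat.choose m (i+1) + (i+2) * Nat.choose m i := by
    exact_mod_cast congrArg (Nat.cast : ℕ → ℝ) hk
  have hf1 : (Nat.factorial (m+1+1) : ℝ) = (m+2) * Nat.factorial (m+1) := by
    rw [show m+1+1 = (m+1)+1 from rfl, Nat.factorial_succ]; push_cast; ring
  have hf2 : (Nat.factorial (i+2) : ℝ) = (i+2) * Nat.factorial (i+1) := by
    rw [show i+2 = (i+1)+1 from rfl, Nat.factorial_succ]; push_cast; ring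
  have hne1 : (Nat.factorial (i+2) : ℝ) ≠ 0 := by positivity
  have hne2 : (Nat.factorial (i+1) : ℝ) ≠ 0 := by positivity
  field_simp
  rw [hf1, hf2]
  push_cast
  linear_combination hc * ((Nat.factorial (m+1):ℝ) * ((Nat.factorial (i+1):ℝ)))

lemma lah_one_rec (n : ℕ) : lah (n+1) 1 = (n+1) * lah n 1 := by
  simp only [lah, Nat.add_sub_cancel, Nat.sub_self, Nat.choose_zero_right, Nat.factorial_succ, Nat.factorial_one]
  push_cast
  ring

lemma lah_top (n : ℕ) (hn : 1 ≤ n) : lah n (n+1) = 0 := by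
  have : (n-1).choose (n+1-1) = 0 := Nat.choose_eq_zero_of_lt (by omega)
  simp only [Nat.add_sub_cancel] at this
  simp [lah, this]

lemma hasDerivAt_term (m : ℕ) (x : ℝ) (hx : 0 < x) :
    HasDerivAt (fun y : ℝ => Real.exp (-(y⁻¹)) * y ^ (-(m:ℤ)))
      (Real.exp (-(x⁻¹)) * (x ^ (-(m:ℤ)-2) - m * x ^ (-(m:ℤ)-1))) x := by
  have h1 : HasDerivAt (fun y : ℝ => -(y⁻¹)) ((x^2)⁻¹) x := by
    have h0 : HasDerivAt (fun y : ℝ => -(y⁻¹)) (-(-(x^2)⁻¹)) x := (hasDerivAt_inv hx.ne').neg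
    simpa using h0
  have h2 := h1.exp
  have h3 : HasDerivAt (fun y : ℝ => y ^ (-(m:ℤ))) ((-(m:ℤ)) * x ^ (-(m:ℤ)-1)) x :=
    by exact_mod_cast hasDerivAt_zpow (-(m:ℤ)) x (Or.inl hx.ne')
  have h4 : HasDerivAt (fun y : ℝ => Real.exp (-(y⁻¹)) * y ^ (-(m:ℤ))) _ x := h2.mul h3
  convert h4 using 1
  have e1 : (x^2)⁻¹ = x ^ (-2 : ℤ) := by
    rw [zpow_neg, ← zpow_natCast x 2]
    norm_num
  have e2 : x ^ (-(m:ℤ)-2) = x ^ (-(m:ℤ)) * x ^ (-2:ℤ) := by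
    rw [← zpow_add₀ hx.ne']; ring_nf
  rw [e1, e2]
  push_cast
  ring

noncomputable def F (n : ℕ) (x : ℝ) : ℝ :=
  ∑ i ∈ Finset.range n, (-1:ℝ)^(n+i+1) * lah n (i+1) *
    (Real.exp (-(x⁻¹)) * x ^ (-((n+i+1:ℕ):ℤ)))

lemma hasDerivAt_F (n : ℕ) (hn : 1 ≤ n) (x : ℝ) (hx : 0 < x) :
    HasDerivAt (fun y => F n y) (F (n+1) x) x := by
  have h := HasDerivAt.fun_sum (fun i (_ : i ∈ Finset.range n) =>
    ((hasDerivAt_term (n+i+1) x hx).const_mul ((-1:ℝ)^(n+i+1) * lah n (i+1))))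
  have key : (∑ i ∈ Finset.range n, (-1:ℝ)^(n+i+1) * lah n (i+1) *
      (Real.exp (-(x⁻¹)) * (x ^ (-((n+i+1:ℕ):ℤ)-2) - ((n+i+1:ℕ):ℝ) * x ^ (-((n+i+1:ℕ):ℤ)-1))))
      = F (n+1) x := by
    set E := Real.exp (-(x⁻¹)) with hE
    have step1 : (∑ i ∈ Finset.range n, (-1:ℝ)^(n+i+1) * lah n (i+1) *
        (E * (x ^ (-((n+i+1:ℕ):ℤ)-2) - ((n+i+1:ℕ):ℝ) * x ^ (-((n+i+1:ℕ):ℤ)-1))))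
        = ∑ i ∈ Finset.range n, ((-1:ℝ)^(n+i+1) * lah n (i+1) * E * x ^ (-((n+i+3:ℕ):ℤ))
            - (-1:ℝ)^(n+i+1) * lah n (i+1) * ((n+i+1:ℕ):ℝ) * E * x ^ (-((n+i+2:ℕ):ℤ))) := by
      refine Finset.sum_congr rfl fun i _ => ?_
      have e1 : (-((n+i+1:ℕ):ℤ)-2) = -((n+i+3:ℕ):ℤ) := by push_cast; ring
      have e2 : (-((n+i+1:ℕ):ℤ)-1) = -((n+i+2:ℕ):ℤ) := by push_cast; ring
      rw [e1, e2]; ring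
    rw [step1, Finset.sum_sub_distrib]
    have hBtop : (-1:ℝ)^(n+n+1) * lah n (n+1) * ((n+n+1:ℕ):ℝ) * E * x ^ (-((n+n+2:ℕ):ℤ)) = 0 := by
      rw [lah_top n hn]; ring
    have hBext : (∑ i ∈ Finset.range n, (-1:ℝ)^(n+i+1) * lah n (i+1) * ((n+i+1:ℕ):ℝ) * E * x ^ (-((n+i+2:ℕ):ℤ)))
        = ∑ i ∈ Finset.range (n+1), (-1:ℝ)^(n+i+1) * lah n (i+1) * ((n+i+1:ℕ):ℝ) * E * x ^ (-((n+i+2:ℕ):ℤ)) := by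
      rw [Finset.sum_range_succ, hBtop, add_zero]
    rw [hBext, Finset.sum_range_succ'
      (fun i => (-1:ℝ)^(n+i+1) * lah n (i+1) * ((n+i+1:ℕ):ℝ) * E * x ^ (-((n+i+2:ℕ):ℤ))) n]
    rw [F, Finset.sum_range_succ'
      (fun i => (-1:ℝ)^(n+1+i+1) * lah (n+1) (i+1) * (E * x ^ (-((n+1+i+1:ℕ):ℤ)))) n]
    have hterm : ∀ i ∈ Finset.range n,
        (-1:ℝ)^(n+i+1) * lah n (i+1) * E * x ^ (-((n+i+3:ℕ):ℤ))
          - (-1:ℝ)^(n+(i+1)+1) * lah n (i+1+1) * ((n+(i+1)+1:ℕ):ℝ) * E * x ^ (-((n+(i+1)+2:ℕ):ℤ))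
        = (-1:ℝ)^(n+1+(i+1)+1) * lah (n+1) (i+1+1) * (E * x ^ (-((n+1+(i+1)+1:ℕ):ℤ))) := by
      intro i _
      have hn1 : n+(i+1)+1 = n+i+2 := by ring
      have hn2 : n+(i+1)+2 = n+i+3 := by ring
      have hn3 : n+1+(i+1)+1 = n+i+3 := by ring
      rw [hn1, hn2, hn3, show i+1+1 = i+2 from rfl, lah_rec n i hn]
      have hp1 : (-1:ℝ)^(n+i+2) = -(-1:ℝ)^(n+i+1) := by
        rw [show n+i+2 = (n+i+1)+1 from rfl, pow_succ]; ring
      have hp2 : (-1:ℝ)^(n+i+3) = (-1:ℝ)^(n+i+1) := by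
        rw [show n+i+3 = (n+i+1)+2 from by ring, pow_add]; norm_num
      rw [hp1, hp2]
      push_cast
      ring
    have hzero : -((-1:ℝ)^(n+0+1) * lah n (0+1) * ((n+0+1:ℕ):ℝ) * E * x ^ (-((n+0+2:ℕ):ℤ)))
        = (-1:ℝ)^(n+1+0+1) * lah (n+1) (0+1) * (E * x ^ (-((n+1+0+1:ℕ):ℤ))) := by
      simp only [Nat.add_zero, add_zero]
      rw [lah_one_rec n]
      have hp : (-1:ℝ)^(n+1+1) = (-1:ℝ)^(n+1) * (-1) := by rw [pow_succ]
      rw [hp, show n+1+1 = n+2 from rfl]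
      push_cast
      ring
    rw [sub_add_eq_sub_sub_swap]
    have h2 := Finset.sum_congr rfl hterm
    rw [Finset.sum_sub_distrib] at h2
    rw [← hzero]
    linarith [h2]
  rw [← key]
  exact h

lemma main_aux (n : ℕ) (hn : 1 ≤ n) :
    ∀ x ∈ Set.Ioi (0:ℝ), iteratedDeriv n (fun y : ℝ => Real.exp (-(1 / y))) x = F n x := by
  induction n with
  | zero => omega
  | succ m ih =>
    intro x hx
    have hx' : (0:ℝ) < x := hx
    rcases Nat.eq_zero_or_pos m with rfl | hm
    · rw [iteratedDeriv_one]
      have h1 : HasDerivAt (fun y : ℝ => -(y⁻¹)) ((x^2)⁻¹) x := by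
        have h0 : HasDerivAt (fun y : ℝ => -(y⁻¹)) (-(-(x^2)⁻¹)) x := (hasDerivAt_inv hx'.ne').neg
        simpa using h0
      have h2' : HasDerivAt (fun y : ℝ => Real.exp (-(1/y))) (Real.exp (-(x⁻¹)) * (x^2)⁻¹) x := by
        simpa [one_div] using h1.exp
      rw [h2'.deriv]
      simp only [F, Finset.sum_range_one, lah]
      norm_num
    · rw [iteratedDeriv_succ]
      have heq : iteratedDeriv m (fun y : ℝ => Real.exp (-(1/y))) =ᶠ[nhds x] (fun y => F m y) :=
        Filter.eventuallyEq_of_mem (isOpen_Ioi.mem_nhds hx) (fun y hy => ih hm y hy)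
      rw [heq.deriv_eq, (hasDerivAt_F m hm x hx').deriv]

theorem iteratedDeriv_exp_neg_inv_eq_lah_sum (n : ℕ) (hn : 1 ≤ n) (x : ℝ) (hx : 0 < x) :
    iteratedDeriv n (fun y : ℝ => Real.exp (-(1 / y))) x
      = (-1 : ℝ) ^ n * Real.exp (-(1 / x)) *
        ∑ k ∈ Finset.Icc 1 n, (-1 : ℝ) ^ k * lah n k / x ^ (n + k) := by
  rw [main_aux n hn x hx, F]
  rw [show Finset.Icc 1 n = Finset.Ico 1 (n+1) by rw [Finset.Ico_add_one_right_eq_Icc],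
    Finset.sum_Ico_eq_sum_range]
  simp only [Nat.add_sub_cancel]
  rw [Finset.mul_sum]
  refine Finset.sum_congr rfl fun i _ => ?_
  rw [zpow_neg, zpow_natCast, one_div x]
  have hp : (-1:ℝ)^(n+i+1) = (-1:ℝ)^n * (-1:ℝ)^(1+i) := by
    rw [← pow_add]; ring_nf
  have he : n + (1+i) = n + i + 1 := by ring
  rw [hp, he, show 1+i = i+1 from by ring]
  ring
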